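/- Consider a repeat-and-tail cascade of substitutions ρ_n: A_n → B^* satisfying the control-of-tail-lengths assumption with constant K > 0. For every ε > 0 there exists n_0 ∈ ℕ such that for every Bernoulli measure p on A^ℤ and every n > n_0, the Bernoulli measures p_n and p̃_n on (A_n)^ℤ satisfy D_{A_n}(p̃_n, p_n) = Σ_{a∈A_n} |p̃_n([a]) − p_n([a])| < ε. -/

import Mathlib

open MeasureTheory Filter Set
open scoped ENNReal NNReal Topology

noncomputable section

namespace LBPaper

/-! ### Words, edit distance, Feldman f̄-distances -/

/-- Length of a longest common substring (order-preserving subsequence) of two `n`-words. -/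
def lcs {α : Type*} (n : ℕ) (a b : Fin n → α) : ℕ :=
  sSup {k : ℕ | ∃ i : Fin k → Fin n, ∃ j : Fin k → Fin n,
    StrictMono i ∧ StrictMono j ∧ ∀ s, a (i s) = b (j s)}

/-- The edit (f̄) distance between two `n`-words: `1 - k/n` where `k` is the length of a
longest common substring. -/
def editDist {α : Type*} (n : ℕ) (a b : Fin n → α) : ℝ :=
  1 - (lcs n a b : ℝ) / (n : ℝ)

/-- The left shift on the two-sided sequence space. -/
def shift (α : Type*) : (ℤ → α) → (ℤ → α) := fun x n => x (n + 1)

/-- The left shift on the one-sided sequence space. -/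
def shiftP (α : Type*) : (ℕ → α) → (ℕ → α) := fun x n => x (n + 1)

/-- The word given by the coordinates `0,…,n-1` of a two-sided sequence. -/
def word {α : Type*} (n : ℕ) (x : ℤ → α) : Fin n → α := fun i => x ((i : ℕ) : ℤ)

/-- The word given by the coordinates `0,…,n-1` of a one-sided sequence. -/
def wordP {α : Type*} (n : ℕ) (x : ℕ → α) : Fin n → α := fun i => x (i : ℕ)

variable {α : Type*} [MeasurableSpace α]

/-- `f̄_n` between two measures on the two-sided shift space: the infimum over all `n`-joinings
of the integral of the edit distance. -/
def fbarN (n : ℕ) (ν ν' : Measure (ℤ → α)) : ℝ :=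
  sInf {r : ℝ | ∃ m : Measure ((Fin n → α) × (Fin n → α)),
    IsProbabilityMeasure m ∧
    m.map Prod.fst = ν.map (word n) ∧
    m.map Prod.snd = ν'.map (word n) ∧
    r = ∫ q, editDist n q.1 q.2 ∂m}

/-- The `f̄`-distance between two measures on the two-sided shift space. -/
def fbar (ν ν' : Measure (ℤ → α)) : ℝ :=
  sInf {ε : ℝ | 0 < ε ∧ ∃ᶠ n in atTop, fbarN n ν ν' ≤ ε}

/-- `f̄_n` between two measures on the one-sided shift space. -/
def fbarNP (n : ℕ) (ν ν' : Measure (ℕ → α)) : ℝ :=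
  sInf {r : ℝ | ∃ m : Measure ((Fin n → α) × (Fin n → α)),
    IsProbabilityMeasure m ∧
    m.map Prod.fst = ν.map (wordP n) ∧
    m.map Prod.snd = ν'.map (wordP n) ∧
    r = ∫ q, editDist n q.1 q.2 ∂m}

/-- The `f̄`-distance between two measures on the one-sided shift space. -/
def fbarP (ν ν' : Measure (ℕ → α)) : ℝ :=
  sInf {ε : ℝ | 0 < ε ∧ ∃ᶠ n in atTop, fbarNP n ν ν' ≤ ε}

/-! ### Kolmogorov–Sinai entropy -/

/-- Shannon entropy of a finite family of sets with respect to a measure. -/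
def partEnt {X : Type*} [MeasurableSpace X] {ι : Type*} [Fintype ι]
    (μ : Measure X) (P : ι → Set X) : ℝ :=
  ∑ i, Real.negMulLog ((μ (P i)).toReal)

/-- The atom of the refinement `⋁_{j<n} T^{-j} P` indexed by the word `s`. -/
def refinedAtom {X ι : Type*} (T : X → X) (P : ι → Set X) (n : ℕ) (s : Fin n → ι) : Set X :=
  ⋂ j : Fin n, (T^[(j : ℕ)]) ⁻¹' P (s j)

/-- `P` is a finite measurable partition of `X`. -/
def IsFinPartition {X : Type*} [MeasurableSpace X] {ι : Type*} (P : ι → Set X) : Prop :=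
  (∀ i, MeasurableSet (P i)) ∧ (Pairwise fun i j => Disjoint (P i) (P j)) ∧
    (⋃ i, P i) = Set.univ

/-- The entropy of `T` with respect to a finite partition `P`
(the limit `lim (1/n) H(⋁_{j<n} T^{-j}P)` equals this infimum). -/
def entPart {X : Type*} [MeasurableSpace X] {ι : Type*} [Fintype ι]
    (T : X → X) (μ : Measure X) (P : ι → Set X) : ℝ :=
  ⨅ n : ℕ, (((n : ℝ) + 1)⁻¹) * partEnt μ (fun s : Fin (n + 1) → ι => refinedAtom T P (n + 1) s)

/-- The Kolmogorov–Sinai (measure-theoretic) entropy of `(T, μ)`: the supremum of the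
entropies with respect to all finite measurable partitions. -/
def ksEntropy {X : Type*} [MeasurableSpace X] (T : X → X) (μ : Measure X) : ℝ :=
  ⨆ (k : ℕ), ⨆ (P : Fin k → Set X), ⨆ (_ : IsFinPartition P), entPart T μ P

/-! ### Loosely Bernoulli -/

/-- `(X, S, μ)` is loosely Bernoulli: every finite measurable partition `P` is LB, i.e. for
every `ε > 0` there are `n` and a collection `G` of atoms of `⋁_{j<n} S^{-j}P` of total
measure `> 1 - ε` that are pairwise `ε`-close in the edit distance (atoms identified with
`n`-words over the index alphabet of `P`). -/
def IsLB {X : Type*} [MeasurableSpace X] (S : X → X) (μ : Measure X) : Prop :=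
  ∀ (k : ℕ) (P : Fin k → Set X), IsFinPartition P →
    ∀ ε : ℝ, 0 < ε → ∃ n : ℕ, 0 < n ∧ ∃ G : Finset (Fin n → Fin k),
      (1 - ε : ℝ) < (μ (⋃ s ∈ G, refinedAtom S P n s)).toReal ∧
      ∀ s ∈ G, ∀ t ∈ G, editDist n s t < ε

/-! ### Bernoulli measures -/

/-- `p` is a probability vector on the finite alphabet `α`. -/
def IsProbVector {α : Type*} [Fintype α] (p : α → ℝ) : Prop :=
  (∀ a, 0 ≤ p a) ∧ ∑ a, p a = 1

/-- `ν` is the Bernoulli (i.i.d. product) measure on `α^ℤ` with marginal probability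
vector `p`. -/
def IsBernoulli {α : Type*} [MeasurableSpace α] (p : α → ℝ) (ν : Measure (ℤ → α)) : Prop :=
  IsProbabilityMeasure ν ∧
    ∀ (s : Finset ℤ) (f : ℤ → α),
      (ν {x : ℤ → α | ∀ i ∈ s, x i = f i}).toReal = ∏ i ∈ s, p (f i)

end LBPaper

namespace LBPaper

/-! ### Repeat-and-tail cascades of substitutions -/

universe u v

/-- The cascade of alphabets: `Alph A m 0 = A` and `Alph A m (n+1) = (Alph A m n)^(m n)`. -/
def Alph (A : Type u) (m : ℕ → ℕ) : ℕ → Type u :=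
  fun n => Nat.rec A (fun k T => Fin (m k) → T) n

instance instAlphFintype {A : Type u} [Fintype A] (m : ℕ → ℕ) :
    ∀ n, Fintype (Alph A m n)
  | 0 => inferInstanceAs (Fintype A)
  | n + 1 =>
    letI := instAlphFintype (A := A) m n
    inferInstanceAs (Fintype (Fin (m n) → Alph A m n))

instance instAlphNonempty {A : Type u} [Nonempty A] (m : ℕ → ℕ) :
    ∀ n, Nonempty (Alph A m n)
  | 0 => inferInstanceAs (Nonempty A)
  | n + 1 =>
    letI := instAlphNonempty (A := A) m n
    inferInstanceAs (Nonempty (Fin (m n) → Alph A m n))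

instance instAlphMeasurableSpace {A : Type u} (m : ℕ → ℕ) (n : ℕ) :
    MeasurableSpace (Alph A m n) := ⊤

instance instAlphMeasurableSingletonClass {A : Type u} (m : ℕ → ℕ) (n : ℕ) :
    MeasurableSingletonClass (Alph A m n) :=
  ⟨fun _ => MeasurableSpace.measurableSet_top⟩

variable {A : Type u} {B : Type v}

/-- The cascade of repeat-and-tail substitutions determined by the initial substitution
`ρ₀` and the tailing maps `t`. -/
def casc (m : ℕ → ℕ) (ρ₀ : A → List B) (t : (n : ℕ) → Alph A m (n + 1) → List B) :
    (n : ℕ) → Alph A m n → List B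
  | 0, a => ρ₀ a
  | n + 1, a => (List.ofFn fun i : Fin (m n) => casc m ρ₀ t n (a i)).flatten ++ t n a

/-- Control-of-tail-lengths assumption with constant `K`: the initial words all are nonempty
of equal length, and the tail added at level `n+1` has length at most
`K 2^{-(n+1)}` times the sum of the lengths of the level-`n` words it follows. -/
def TailControlled (m : ℕ → ℕ) (ρ₀ : A → List B)
    (t : (n : ℕ) → Alph A m (n + 1) → List B) (K : ℝ) : Prop :=
  (∃ ℓ : ℕ, 0 < ℓ ∧ ∀ a : A, (ρ₀ a).length = ℓ) ∧
    ∀ (n : ℕ) (a : Alph A m (n + 1)),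
      ((t n a).length : ℝ) ≤
        K / 2 ^ (n + 1) * ∑ i : Fin (m n), ((casc m ρ₀ t n (a i)).length : ℝ)

/-- The spelling of a letter of `Alph A m (k+d)` as a word over `Alph A m k`. -/
def spellTo (m : ℕ → ℕ) (k : ℕ) : (d : ℕ) → Alph A m (k + d) → List (Alph A m k)
  | 0, a => [a]
  | d + 1, a => (List.ofFn fun i : Fin (m (k + d)) => spellTo m k d (a i)).flatten

/-- The spelling of a letter of `Alph A m n` as a word over the initial alphabet `A`. -/
def spell0 (m : ℕ → ℕ) : (n : ℕ) → Alph A m n → List A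
  | 0, a => [a]
  | n + 1, a => (List.ofFn fun i : Fin (m n) => spell0 m n (a i)).flatten

/-- The probability vector of the Bernoulli measure `p_n = (S̲_{n,0}^{-1})_* p`
on `(Alph A m n)^ℤ`. -/
def pvec (m : ℕ → ℕ) (p : A → ℝ) (n : ℕ) (a : Alph A m n) : ℝ :=
  ((spell0 m n a).map p).prod

/-- The probability vector of the length-reweighted Bernoulli measure `p̃_n`. -/
def ptilde [Fintype A] (m : ℕ → ℕ) (ρ₀ : A → List B)
    (t : (n : ℕ) → Alph A m (n + 1) → List B) (p : A → ℝ) (n : ℕ) (a : Alph A m n) : ℝ :=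
  (((casc m ρ₀ t n a).length : ℝ) * pvec m p n a) /
    (∑ b : Alph A m n, ((casc m ρ₀ t n b).length : ℝ) * pvec m p n b)

end LBPaper

namespace LBPaper

variable {A : Type*} {B : Type*}

/-- `max|ρ_n|`: the maximal length of a level-`n` word of the cascade. -/
def cascMax [Fintype A] [Nonempty A] (m : ℕ → ℕ) (ρ₀ : A → List B)
    (t : (n : ℕ) → Alph A m (n + 1) → List B) (n : ℕ) : ℕ :=
  Finset.univ.sup' Finset.univ_nonempty fun a : Alph A m n => (casc m ρ₀ t n a).length

/-- `min|ρ_n|`: the minimal length of a level-`n` word of the cascade. -/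
def cascMin [Fintype A] [Nonempty A] (m : ℕ → ℕ) (ρ₀ : A → List B)
    (t : (n : ℕ) → Alph A m (n + 1) → List B) (n : ℕ) : ℕ :=
  Finset.univ.inf' Finset.univ_nonempty fun a : Alph A m n => (casc m ρ₀ t n a).length

end LBPaper

namespace LBPaper

set_option maxHeartbeats 1000000

private lemma sum_pi_prod {α : Type*} [Fintype α] {M : ℕ} (F : Fin M → α → ℝ) :
    ∑ a : Fin M → α, ∏ k, F k (a k) = ∏ k, ∑ x, F k x := by
  rw [Finset.prod_univ_sum]
  rw [Fintype.piFinset_univ]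

private lemma exp_coord {α : Type*} [Fintype α] {M : ℕ} (w h : α → ℝ)
    (hw : ∑ x, w x = 1) (i : Fin M) :
    ∑ a : Fin M → α, (∏ k, w (a k)) * h (a i) = ∑ x, w x * h x := by
  have e1 : ∀ a : Fin M → α, (∏ k, w (a k)) * h (a i)
      = ∏ k, (w (a k) * if k = i then h (a k) else 1) := by
    intro a
    rw [Finset.prod_mul_distrib, Finset.prod_ite_eq']
    simp
  simp_rw [e1]
  rw [sum_pi_prod (fun k x => w x * if k = i then h x else 1)]
  have e2 : ∀ k : Fin M, (∑ x, (w x * if k = i then h x else 1))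
      = if k = i then ∑ x, w x * h x else 1 := by
    intro k
    by_cases hk : k = i <;> simp [hk, hw]
  simp_rw [e2]
  rw [Finset.prod_ite_eq']
  simp

private lemma exp_coord2 {α : Type*} [Fintype α] {M : ℕ} (w h g : α → ℝ)
    (hw : ∑ x, w x = 1) {i j : Fin M} (hij : i ≠ j) :
    ∑ a : Fin M → α, (∏ k, w (a k)) * (h (a i) * g (a j))
      = (∑ x, w x * h x) * (∑ x, w x * g x) := by
  have e1 : ∀ a : Fin M → α, (∏ k, w (a k)) * (h (a i) * g (a j))
      = ∏ k, (w (a k) * ((if k = i then h (a k) else 1) * (if k = j then g (a k) else 1))) := by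
    intro a
    simp_rw [Finset.prod_mul_distrib]
    rw [Finset.prod_ite_eq', Finset.prod_ite_eq']
    simp
  simp_rw [e1]
  rw [sum_pi_prod (fun k x => w x * ((if k = i then h x else 1) * (if k = j then g x else 1)))]
  have e2 : ∀ k : Fin M, (∑ x, (w x * ((if k = i then h x else 1) * (if k = j then g x else 1))))
      = (if k = i then ∑ x, w x * h x else 1) * (if k = j then ∑ x, w x * g x else 1) := by
    intro k
    by_cases hk : k = i
    · subst hk
      have : k ≠ j := hij
      simp [this, mul_comm]
    · by_cases hk2 : k = j
      · subst hk2
        have : ¬ (k = i) := hk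
        simp [this, hw, mul_comm]
      · simp [hk, hk2, hw]
  simp_rw [e2]
  rw [Finset.prod_mul_distrib, Finset.prod_ite_eq', Finset.prod_ite_eq']
  simp

private lemma var_sum {α : Type*} [Fintype α] {M : ℕ} (w f : α → ℝ)
    (hw : ∑ x, w x = 1) (hmean : ∑ x, w x * f x = 0) :
    ∑ a : Fin M → α, (∏ k, w (a k)) * (∑ i, f (a i)) ^ 2
      = M * ∑ x, w x * f x ^ 2 := by
  have expand : ∀ a : Fin M → α, (∏ k, w (a k)) * (∑ i, f (a i)) ^ 2
      = ∑ i, ∑ j, (∏ k, w (a k)) * (f (a i) * f (a j)) := by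
    intro a
    rw [sq, Finset.sum_mul_sum]
    rw [Finset.mul_sum]
    refine Finset.sum_congr rfl fun i _ => ?_
    rw [Finset.mul_sum]
  simp_rw [expand]
  rw [Finset.sum_comm]
  have swap2 : ∀ i : Fin M,
      (∑ a : Fin M → α, ∑ j, (∏ k, w (a k)) * (f (a i) * f (a j)))
        = ∑ j, ∑ a : Fin M → α, (∏ k, w (a k)) * (f (a i) * f (a j)) := by
    intro i; rw [Finset.sum_comm]
  simp_rw [swap2]
  have inner : ∀ i j : Fin M,
      (∑ a : Fin M → α, (∏ k, w (a k)) * (f (a i) * f (a j)))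
        = if i = j then ∑ x, w x * f x ^ 2 else 0 := by
    intro i j
    by_cases hij : i = j
    · subst hij
      rw [if_pos rfl]
      have := exp_coord w (fun x => f x * f x) hw i
      simpa [sq] using this
    · rw [if_neg hij, exp_coord2 w f f hw hij, hmean, mul_zero]
  simp_rw [inner]
  simp [Finset.sum_ite_eq]



variable {A B : Type*}

private lemma casc_len (m : ℕ → ℕ) (ρ₀ : A → List B) (t : (n : ℕ) → Alph A m (n + 1) → List B)
    (n : ℕ) (a : Alph A m (n + 1)) :
    (casc m ρ₀ t (n + 1) a).length
      = (∑ i, (casc m ρ₀ t n (a i)).length) + (t n a).length := by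
  simp [casc, List.length_flatten, List.map_ofFn, List.sum_ofFn, Function.comp]

private lemma pvec_succ [Fintype A] (m : ℕ → ℕ) (p : A → ℝ) (n : ℕ) (a : Alph A m (n + 1)) :
    pvec m p (n + 1) a = ∏ i, pvec m p n (a i) := by
  simp [pvec, spell0, List.map_flatten, List.prod_flatten, List.map_ofFn, List.prod_ofFn,
    Function.comp]

private lemma pvec_nonneg [Fintype A] (m : ℕ → ℕ) {p : A → ℝ} (hp : ∀ x, 0 ≤ p x)
    (n : ℕ) (a : Alph A m n) : 0 ≤ pvec m p n a := by
  have aux : ∀ l : List A, 0 ≤ (l.map p).prod := by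
    intro l
    induction l with
    | nil => simp
    | cons x xs ih => simp only [List.map_cons, List.prod_cons]; exact mul_nonneg (hp x) ih
  exact aux _

private lemma alph_sum_pi [Fintype A] (m : ℕ → ℕ) (n : ℕ) (f : Alph A m (n + 1) → ℝ) :
    ∑ a : Alph A m (n + 1), f a = ∑ a : Fin (m n) → Alph A m n, f a := rfl

private lemma pvec_sum [Fintype A] (m : ℕ → ℕ) {p : A → ℝ} (hp : ∑ x, p x = 1) :
    ∀ n, ∑ a : Alph A m n, pvec m p n a = 1 := by
  intro n
  induction n with
  | zero => exact (Finset.sum_congr rfl fun a _ => (List.prod_singleton : [p a].prod = p a)).trans hp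
  | succ n ih =>
    rw [Finset.sum_congr rfl fun a _ => pvec_succ m p n a]
    show ∑ a : Fin (m n) → Alph A m n, ∏ i, pvec m p n (a i) = 1
    rw [sum_pi_prod (fun _ x => pvec m p n x)]
    simp [ih]


end LBPaper

namespace LBPaper

/-- Under the control-of-tail-lengths assumption, for every `ε > 0` there
is `n₀` (independent of the Bernoulli measure) such that for every probability vector `p`
on `A` and every `n > n₀`, the probability vectors of `p̃_n` and `p_n` satisfy
`D_{A_n}(p̃_n, p_n) < ε`. -/
theorem ptilde_close_to_pvec
    {A B : Type*} [Fintype A]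
    (m : ℕ → ℕ) (hm : ∀ n, 2 ≤ m n)
    (ρ₀ : A → List B) (t : (n : ℕ) → Alph A m (n + 1) → List B)
    (K : ℝ) (hK : 0 < K) (hctrl : TailControlled m ρ₀ t K)
    (ε : ℝ) (hε : 0 < ε) :
    ∃ n₀ : ℕ, ∀ (p : A → ℝ), IsProbVector p → ∀ n : ℕ, n₀ < n →
      ∑ a : Alph A m n, |ptilde m ρ₀ t p n a - pvec m p n a| < ε := by
  classical
  obtain ⟨⟨ℓ, hℓ, hρ⟩, htail⟩ := hctrl
  set C := Real.exp K with hCdef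
  have hC1 : (1:ℝ) ≤ C := Real.one_le_exp hK.le
  have hC0 : (0:ℝ) < C := lt_of_lt_of_le one_pos hC1
  set N : ℕ → ℕ := fun n => ℓ * ∏ k ∈ Finset.range n, m k with hNdef
  have hNpos : ∀ n, 0 < N n := by
    intro n
    exact Nat.mul_pos hℓ (Finset.prod_pos fun k _ => lt_of_lt_of_le two_pos (hm k))
  have hNsucc : ∀ n, N (n+1) = N n * m n := by
    intro n; simp [hNdef, Finset.prod_range_succ, mul_assoc]
  have hLlow : ∀ n (a : Alph A m n), N n ≤ (casc m ρ₀ t n a).length := by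
    intro n
    induction n with
    | zero => intro a; simpa [hNdef, casc] using (hρ a).ge
    | succ n ih =>
      intro a
      rw [casc_len, hNsucc]
      calc N n * m n = ∑ _i : Fin (m n), N n := by simp [mul_comm]
        _ ≤ ∑ i, (casc m ρ₀ t n (a i)).length := Finset.sum_le_sum fun i _ => ih (a i)
        _ ≤ _ := Nat.le_add_right _ _
  have hLup : ∀ n (a : Alph A m n), ((casc m ρ₀ t n a).length : ℝ) ≤ C * N n := by
    have hP : ∀ n (a : Alph A m n),
        ((casc m ρ₀ t n a).length : ℝ) ≤ (∏ k ∈ Finset.range n, (1 + K / 2 ^ (k+1))) * N n := by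
      intro n
      induction n with
      | zero => intro a; simp [hNdef, casc, hρ a]
      | succ n ih =>
        intro a
        have hsum : ∑ i, ((casc m ρ₀ t n (a i)).length : ℝ)
            ≤ (m n) * ((∏ k ∈ Finset.range n, (1 + K / 2 ^ (k+1))) * N n) := by
          calc ∑ i, ((casc m ρ₀ t n (a i)).length : ℝ)
              ≤ ∑ _i : Fin (m n), (∏ k ∈ Finset.range n, (1 + K / 2 ^ (k+1))) * N n :=
                Finset.sum_le_sum fun i _ => ih (a i)
            _ = (m n) * ((∏ k ∈ Finset.range n, (1 + K / 2 ^ (k+1))) * N n) := by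
                simp [mul_comm]
        have e : ((casc m ρ₀ t (n+1) a).length : ℝ)
            = (∑ i, ((casc m ρ₀ t n (a i)).length : ℝ)) + (t n a).length := by
          rw [casc_len]; push_cast; ring
        have hq : (0:ℝ) ≤ 1 + K / 2 ^ (n+1) := by positivity
        calc ((casc m ρ₀ t (n+1) a).length : ℝ)
            = (∑ i, ((casc m ρ₀ t n (a i)).length : ℝ)) + (t n a).length := e
          _ ≤ (∑ i, ((casc m ρ₀ t n (a i)).length : ℝ))
              + K / 2 ^ (n+1) * ∑ i, ((casc m ρ₀ t n (a i)).length : ℝ) := by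
                linarith [htail n a]
          _ = (1 + K / 2 ^ (n+1)) * ∑ i, ((casc m ρ₀ t n (a i)).length : ℝ) := by ring
          _ ≤ (1 + K / 2 ^ (n+1)) * ((m n) * ((∏ k ∈ Finset.range n, (1 + K / 2 ^ (k+1))) * N n)) :=
                mul_le_mul_of_nonneg_left hsum hq
          _ = (∏ k ∈ Finset.range (n+1), (1 + K / 2 ^ (k+1))) * N (n+1) := by
                rw [Finset.prod_range_succ, hNsucc]; push_cast; ring
    have hprod : ∀ n, (∏ k ∈ Finset.range n, (1 + K / 2 ^ (k+1))) ≤ C := by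
      intro n
      calc ∏ k ∈ Finset.range n, (1 + K / 2 ^ (k+1))
          ≤ ∏ k ∈ Finset.range n, Real.exp (K / 2 ^ (k+1)) :=
            Finset.prod_le_prod (fun k _ => by positivity)
              (fun k _ => by linarith [Real.add_one_le_exp (K / 2 ^ (k+1))])
        _ = Real.exp (∑ k ∈ Finset.range n, K / 2 ^ (k+1)) := (Real.exp_sum _ _).symm
        _ ≤ C := by
            rw [hCdef]
            apply Real.exp_le_exp.2
            have e2 : ∀ k, K / 2 ^ (k+1) = K / 2 * (1/2:ℝ)^k := by
              intro k; rw [one_div, inv_pow, pow_succ, div_eq_mul_inv, div_eq_mul_inv, mul_inv]; ring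
            simp_rw [e2]
            rw [← Finset.mul_sum]
            nlinarith [sum_geometric_two_le n, hK.le,
              Finset.sum_nonneg (fun k (_ : k ∈ Finset.range n) => pow_nonneg (by norm_num : (0:ℝ) ≤ 1/2) k)]
    intro n a
    calc ((casc m ρ₀ t n a).length : ℝ) ≤ _ := hP n a
      _ ≤ C * N n := mul_le_mul_of_nonneg_right (hprod n) (by positivity)
  obtain ⟨n₀, hn₀⟩ := exists_pow_lt_of_lt_one
    (show (0:ℝ) < ε^2 / (2 * K^2 * C^2) by positivity) (by norm_num : (3/4:ℝ) < 1)
  refine ⟨n₀, fun p hp => ?_⟩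
  have hw0 : ∀ n (a : Alph A m n), 0 ≤ pvec m p n a := fun n a => pvec_nonneg m hp.1 n a
  have hwsum : ∀ n, ∑ a : Alph A m n, pvec m p n a = 1 := pvec_sum m hp.2
  obtain ⟨S, hSdef⟩ : ∃ S : ℕ → ℝ, ∀ n, S n
      = ∑ b : Alph A m n, ((casc m ρ₀ t n b).length : ℝ) * pvec m p n b := ⟨_, fun _ => rfl⟩
  obtain ⟨V, hVdef⟩ : ∃ V : ℕ → ℝ, ∀ n, V n
      = ∑ a : Alph A m n, pvec m p n a * (((casc m ρ₀ t n a).length : ℝ) - S n)^2 :=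
    ⟨_, fun _ => rfl⟩
  have hS2 : ∀ n, S n = ∑ b : Alph A m n, pvec m p n b * ((casc m ρ₀ t n b).length : ℝ) := by
    intro n; rw [hSdef]; exact Finset.sum_congr rfl fun b _ => mul_comm _ _
  have hSge : ∀ n, (N n : ℝ) ≤ S n := by
    intro n
    rw [hS2]
    calc (N n : ℝ) = ∑ b : Alph A m n, pvec m p n b * (N n : ℝ) := by
          rw [← Finset.sum_mul, hwsum n, one_mul]
      _ ≤ _ := Finset.sum_le_sum fun b _ =>
          mul_le_mul_of_nonneg_left (by exact_mod_cast Nat.cast_le.2 (hLlow n b)) (hw0 n b)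
  have hSpos : ∀ n, (0:ℝ) < S n := fun n =>
    lt_of_lt_of_le (by exact_mod_cast hNpos n) (hSge n)
  have hV0 : ∀ n, 0 ≤ V n := by
    intro n; rw [hVdef]; exact Finset.sum_nonneg fun a _ => mul_nonneg (hw0 n a) (sq_nonneg _)
  have hmean : ∀ n, ∑ a : Alph A m n,
      pvec m p n a * (((casc m ρ₀ t n a).length : ℝ) - S n) = 0 := by
    intro n
    have e : ∀ a : Alph A m n, pvec m p n a * (((casc m ρ₀ t n a).length : ℝ) - S n)
        = pvec m p n a * ((casc m ρ₀ t n a).length : ℝ) - pvec m p n a * S n := fun a => by ring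
    simp_rw [e]
    rw [Finset.sum_sub_distrib, ← hS2, ← Finset.sum_mul, hwsum, one_mul, sub_self]
  have hVzero : V 0 = 0 := by
    have hS0 : S 0 = (ℓ : ℝ) := by
      rw [hSdef]
      have e : ∀ b : Alph A m 0, ((casc m ρ₀ t 0 b).length : ℝ) * pvec m p 0 b
          = (ℓ:ℝ) * pvec m p 0 b := by
        intro b
        have h : (casc m ρ₀ t 0 b).length = ℓ := hρ b
        rw [h]
      simp_rw [e]
      rw [← Finset.mul_sum, hwsum 0, mul_one]
    rw [hVdef]
    apply Finset.sum_eq_zero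
    intro a _
    have h : (casc m ρ₀ t 0 a).length = ℓ := hρ a
    rw [h, hS0]
    simp
  have hT : ∀ n (a : Alph A m (n+1)),
      ((t n a).length : ℝ) ≤ K * C * (1/2:ℝ)^(n+1) * N (n+1) := by
    intro n a
    have h2 : ∑ i, ((casc m ρ₀ t n (a i)).length : ℝ) ≤ (m n) * (C * N n) := by
      calc ∑ i, ((casc m ρ₀ t n (a i)).length : ℝ)
          ≤ ∑ _i : Fin (m n), C * (N n:ℝ) := Finset.sum_le_sum fun i _ => hLup n (a i)
        _ = (m n) * (C * N n) := by simp [mul_comm]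
    calc ((t n a).length : ℝ)
        ≤ K / 2 ^ (n+1) * ∑ i, ((casc m ρ₀ t n (a i)).length : ℝ) := htail n a
      _ ≤ K / 2 ^ (n+1) * ((m n) * (C * N n)) :=
          mul_le_mul_of_nonneg_left h2 (by positivity)
      _ = K * C * (1/2:ℝ)^(n+1) * N (n+1) := by
          rw [hNsucc]
          push_cast
          rw [div_pow, one_pow]
          field_simp
  have hVrec : ∀ n, V (n+1) ≤ (3/2) * (m n) * V n
      + 3 * (K * C * (1/2:ℝ)^(n+1) * (N (n+1):ℝ))^2 := by
    intro n
    set τ := K * C * (1/2:ℝ)^(n+1) * (N (n+1):ℝ) with hτ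
    have hτ0 : 0 ≤ τ := by rw [hτ]; positivity
    obtain ⟨ET, hETdef⟩ : ∃ ET : ℝ,
        ET = ∑ a : Alph A m (n+1), pvec m p (n+1) a * ((t n a).length:ℝ) := ⟨_, rfl⟩
    have hET0 : 0 ≤ ET := hETdef ▸ Finset.sum_nonneg fun a _ =>
      mul_nonneg (hw0 _ a) (by positivity)
    have hETle : ET ≤ τ := by
      rw [hETdef]
      calc _ ≤ ∑ a : Alph A m (n+1), pvec m p (n+1) a * τ :=
            Finset.sum_le_sum fun a _ => mul_le_mul_of_nonneg_left (hT n a) (hw0 _ a)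
        _ = τ := by rw [← Finset.sum_mul, hwsum, one_mul]
    have hSrec : S (n+1) = (m n) * S n + ET := by
      rw [hS2 (n+1), hETdef]
      have e : ∀ a : Alph A m (n+1), pvec m p (n+1) a * ((casc m ρ₀ t (n+1) a).length : ℝ)
          = (∏ k, pvec m p n (a k)) * (∑ i, ((casc m ρ₀ t n (a i)).length:ℝ))
            + pvec m p (n+1) a * ((t n a).length:ℝ) := by
        intro a
        rw [casc_len, pvec_succ]
        push_cast
        ring
      simp_rw [e]
      rw [Finset.sum_add_distrib]
      congr 1
      have e2 : ∀ a : Alph A m (n+1),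
          (∏ k, pvec m p n (a k)) * (∑ i, ((casc m ρ₀ t n (a i)).length:ℝ))
          = ∑ i, (∏ k, pvec m p n (a k)) * ((casc m ρ₀ t n (a i)).length:ℝ) := by
        intro a; rw [Finset.mul_sum]
      simp_rw [e2]
      rw [alph_sum_pi, Finset.sum_comm]
      have e3 : ∀ i : Fin (m n), (∑ a : Fin (m n) → Alph A m n,
          (∏ k, pvec m p n (a k)) * ((casc m ρ₀ t n (a i)).length:ℝ)) = S n := by
        intro i
        exact (exp_coord (pvec m p n) (fun x => ((casc m ρ₀ t n x).length : ℝ))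
          (hwsum n) i).trans (hS2 n).symm
      simp_rw [e3]
      simp [mul_comm]
    have hdecomp : ∀ a : Alph A m (n+1),
        ((casc m ρ₀ t (n+1) a).length : ℝ) - S (n+1)
          = (∑ i, (((casc m ρ₀ t n (a i)).length : ℝ) - S n)) + (((t n a).length:ℝ) - ET) := by
      intro a
      rw [casc_len, hSrec, Finset.sum_sub_distrib]
      push_cast
      simp only [Finset.sum_const, Finset.card_univ, Fintype.card_fin, nsmul_eq_mul]
      ring
    have hpt : ∀ a : Alph A m (n+1),
        pvec m p (n+1) a * (((casc m ρ₀ t (n+1) a).length : ℝ) - S (n+1))^2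
          ≤ pvec m p (n+1) a *
            ((3/2) * (∑ i, (((casc m ρ₀ t n (a i)).length : ℝ) - S n))^2 + 3 * τ^2) := by
      intro a
      apply mul_le_mul_of_nonneg_left _ (hw0 _ a)
      rw [hdecomp a]
      have hE : (((t n a).length:ℝ) - ET)^2 ≤ τ^2 := by
        have h1 : ((t n a).length:ℝ) - ET ≤ τ := by
          have : (0:ℝ) ≤ ET := hET0
          linarith [hT n a]
        have h2 : -τ ≤ ((t n a).length:ℝ) - ET := by
          have : (0:ℝ) ≤ ((t n a).length:ℝ) := by positivity
          linarith [hETle]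
        nlinarith
      nlinarith [sq_nonneg ((∑ i, (((casc m ρ₀ t n (a i)).length : ℝ) - S n))
        - 2*(((t n a).length:ℝ) - ET))]
    calc V (n+1) = _ := hVdef (n+1)
      _ ≤ ∑ a : Alph A m (n+1), pvec m p (n+1) a *
            ((3/2) * (∑ i, (((casc m ρ₀ t n (a i)).length : ℝ) - S n))^2 + 3 * τ^2) :=
          Finset.sum_le_sum fun a _ => hpt a
      _ = (3/2) * (∑ a : Alph A m (n+1), pvec m p (n+1) a *
            (∑ i, (((casc m ρ₀ t n (a i)).length : ℝ) - S n))^2)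
          + 3 * τ^2 * ∑ a : Alph A m (n+1), pvec m p (n+1) a := by
          rw [Finset.mul_sum, Finset.mul_sum, ← Finset.sum_add_distrib]
          exact Finset.sum_congr rfl fun a _ => by ring
      _ = (3/2) * ((m n) * V n) + 3 * τ^2 := by
          rw [hwsum, mul_one]
          have hv : (∑ a : Alph A m (n+1), pvec m p (n+1) a *
              (∑ i, (((casc m ρ₀ t n (a i)).length : ℝ) - S n))^2) = (m n) * V n := by
            rw [alph_sum_pi]
            have e : ∀ a : Fin (m n) → Alph A m n, pvec m p (n+1) a *
                (∑ i, (((casc m ρ₀ t n (a i)).length : ℝ) - S n))^2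
                = (∏ k, pvec m p n (a k)) *
                  (∑ i, (((casc m ρ₀ t n (a i)).length : ℝ) - S n))^2 := by
              intro a; exact congrArg (fun x => x * (∑ i, (((casc m ρ₀ t n (a i)).length : ℝ) - S n))^2) (pvec_succ m p n a)
            simp_rw [e]
            rw [hVdef n]
            exact var_sum (pvec m p n) (fun x => ((casc m ρ₀ t n x).length : ℝ) - S n)
              (hwsum n) (hmean n)
          rw [hv]
      _ = (3/2) * (m n) * V n + 3 * τ^2 := by ring
  have hVbound : ∀ n, V n ≤ 2 * K^2 * C^2 * ((3/4:ℝ)^n - (1/4:ℝ)^n) * (N n:ℝ)^2 := by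
    intro n
    induction n with
    | zero => simp [hVzero]
    | succ n ih =>
      have hrec := hVrec n
      have hm2 : (2:ℝ) ≤ (m n : ℝ) := by exact_mod_cast hm n
      have hxy : (1/4:ℝ)^n ≤ (3/4:ℝ)^n := pow_le_pow_left₀ (by norm_num) (by norm_num) n
      have hNr : (N (n+1) : ℝ) = (N n : ℝ) * (m n : ℝ) := by rw [hNsucc]; push_cast; ring
      have hN0 : (0:ℝ) < (N n : ℝ) := by exact_mod_cast hNpos n
      have hhalf : ((1/2:ℝ)^(n+1))^2 = (1/4:ℝ)^(n+1) := by
        rw [← pow_mul, mul_comm, pow_mul]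
        norm_num
      have hτsq : (K * C * (1/2:ℝ)^(n+1) * (N (n+1):ℝ))^2
          = K^2 * C^2 * (1/4:ℝ)^(n+1) * (N (n+1):ℝ)^2 := by
        rw [← hhalf]; ring
      have hq0 : (0:ℝ) ≤ K^2 * C^2 * ((3/4:ℝ)^n - (1/4:ℝ)^n) := by
        apply mul_nonneg (by positivity)
        linarith
      have step1 : (3/2) * (m n : ℝ) * V n
          ≤ 3 * (K^2 * C^2 * ((3/4:ℝ)^n - (1/4:ℝ)^n)) * ((N n:ℝ)^2 * (m n:ℝ)) := by
        have h := mul_le_mul_of_nonneg_left ih (show (0:ℝ) ≤ (3/2)*(m n:ℝ) by positivity)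
        linarith [h]
      have step2 : (3:ℝ) * (K^2 * C^2 * ((3/4:ℝ)^n - (1/4:ℝ)^n)) * ((N n:ℝ)^2 * (m n:ℝ))
          ≤ (3/2) * (K^2 * C^2 * ((3/4:ℝ)^n - (1/4:ℝ)^n)) * (N (n+1):ℝ)^2 := by
        rw [hNr]
        have key : (0:ℝ) ≤ (K^2 * C^2 * ((3/4:ℝ)^n - (1/4:ℝ)^n)) * ((N n:ℝ)^2 * (m n:ℝ))
            * ((m n:ℝ) - 2) := by
          apply mul_nonneg (mul_nonneg hq0 (by positivity))
          linarith
        linarith [key]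
      have e3 : (3/4:ℝ)^(n+1) = (3/4) * (3/4:ℝ)^n := by rw [pow_succ]; ring
      have e4 : (1/4:ℝ)^(n+1) = (1/4) * (1/4:ℝ)^n := by rw [pow_succ]; ring
      have hpos : (0:ℝ) ≤ K^2 * C^2 * (1/4:ℝ)^n * (N (n+1):ℝ)^2 := by positivity
      calc V (n+1) ≤ (3/2) * (m n) * V n + 3 * (K * C * (1/2:ℝ)^(n+1) * (N (n+1):ℝ))^2 := hrec
        _ ≤ (3/2) * (K^2 * C^2 * ((3/4:ℝ)^n - (1/4:ℝ)^n)) * (N (n+1):ℝ)^2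
            + 3 * (K^2 * C^2 * (1/4:ℝ)^(n+1)) * (N (n+1):ℝ)^2 := by
            rw [hτsq]
            have := step1.trans step2
            linarith
        _ ≤ 2 * K^2 * C^2 * ((3/4:ℝ)^(n+1) - (1/4:ℝ)^(n+1)) * (N (n+1):ℝ)^2 := by
            rw [e3, e4]
            nlinarith [hpos]
  intro n hn
  have hpow : (3/4:ℝ)^n < ε^2 / (2*K^2*C^2) := by
    calc (3/4:ℝ)^n ≤ (3/4:ℝ)^n₀ := pow_le_pow_of_le_one (by norm_num) (by norm_num) hn.le
      _ < _ := hn₀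
  have hterm : ∀ a : Alph A m n, |ptilde m ρ₀ t p n a - pvec m p n a|
      = pvec m p n a * |((casc m ρ₀ t n a).length : ℝ) - S n| / S n := by
    intro a
    have e : ptilde m ρ₀ t p n a - pvec m p n a
        = pvec m p n a * (((casc m ρ₀ t n a).length : ℝ) - S n) / S n := by
      unfold ptilde
      rw [← hSdef n]
      field_simp [(hSpos n).ne']
    rw [e, abs_div, abs_mul, abs_of_nonneg (hw0 n a), abs_of_pos (hSpos n)]
  have hsum_eq : (∑ a : Alph A m n, |ptilde m ρ₀ t p n a - pvec m p n a|)
      = (∑ a : Alph A m n, pvec m p n a * |((casc m ρ₀ t n a).length : ℝ) - S n|) / S n := by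
    rw [Finset.sum_div]
    exact Finset.sum_congr rfl fun a _ => hterm a
  have hCS : (∑ a : Alph A m n, pvec m p n a * |((casc m ρ₀ t n a).length : ℝ) - S n|)^2
      ≤ V n := by
    have key := Finset.sum_mul_sq_le_sq_mul_sq Finset.univ
      (fun a : Alph A m n => Real.sqrt (pvec m p n a))
      (fun a => Real.sqrt (pvec m p n a) * |((casc m ρ₀ t n a).length : ℝ) - S n|)
    have e1 : ∀ a : Alph A m n, Real.sqrt (pvec m p n a) *
        (Real.sqrt (pvec m p n a) * |((casc m ρ₀ t n a).length : ℝ) - S n|)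
        = pvec m p n a * |((casc m ρ₀ t n a).length : ℝ) - S n| := by
      intro a
      rw [← mul_assoc, Real.mul_self_sqrt (hw0 n a)]
    have e2 : ∀ a : Alph A m n, (Real.sqrt (pvec m p n a))^2 = pvec m p n a :=
      fun a => Real.sq_sqrt (hw0 n a)
    have e3 : ∀ a : Alph A m n,
        (Real.sqrt (pvec m p n a) * |((casc m ρ₀ t n a).length : ℝ) - S n|)^2
        = pvec m p n a * (((casc m ρ₀ t n a).length : ℝ) - S n)^2 := by
      intro a
      rw [mul_pow, Real.sq_sqrt (hw0 n a), sq_abs]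
    simp_rw [e1, e2, e3] at key
    rw [hwsum n, one_mul] at key
    rw [hVdef]
    exact key
  have hQ0 : 0 ≤ ∑ a : Alph A m n, pvec m p n a * |((casc m ρ₀ t n a).length : ℝ) - S n| :=
    Finset.sum_nonneg fun a _ => mul_nonneg (hw0 n a) (abs_nonneg _)
  have hNp2 : (0:ℝ) < (N n:ℝ)^2 := by
    have : (0:ℝ) < (N n : ℝ) := by exact_mod_cast hNpos n
    positivity
  have hfin : ((∑ a : Alph A m n, |ptilde m ρ₀ t p n a - pvec m p n a|))^2 < ε^2 := by
    rw [hsum_eq, div_pow]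
    have hNle : (N n:ℝ)^2 ≤ (S n)^2 := by
      have h1 := hSge n
      have h2 : (0:ℝ) ≤ (N n:ℝ) := by positivity
      nlinarith
    have hdrop : (0:ℝ) ≤ 2*K^2*C^2*(1/4:ℝ)^n := by positivity
    calc (∑ a : Alph A m n, pvec m p n a * |((casc m ρ₀ t n a).length : ℝ) - S n|)^2 / (S n)^2
        ≤ V n / (N n:ℝ)^2 := div_le_div₀ (hV0 n) hCS hNp2 hNle
      _ ≤ 2*K^2*C^2*((3/4:ℝ)^n - (1/4:ℝ)^n) := by
          rw [div_le_iff₀ hNp2]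
          exact hVbound n
      _ ≤ 2*K^2*C^2*(3/4:ℝ)^n := by nlinarith [hdrop]
      _ < ε^2 := by
          rw [lt_div_iff₀ (show (0:ℝ) < 2*K^2*C^2 by positivity)] at hpow
          nlinarith [hpow]
  have hfin0 : 0 ≤ ∑ a : Alph A m n, |ptilde m ρ₀ t p n a - pvec m p n a| :=
    Finset.sum_nonneg fun a _ => abs_nonneg _
  exact lt_of_pow_lt_pow_left₀ 2 hε.le hfin


end LBPaper
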